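/- Suppose ψ : (0, r₀] → ℝ is differentiable and satisfies ψ'(r) + (2/r + (2/(n-1))f'(r))·ψ(r) ≤ 4(n-1)/r² on (0, r₀], where f is C¹ with |f| ≤ k, and r²·e^{(2/(n-1))f(r)}·ψ(r) → 0 as r → 0⁺. Then ψ(r) ≤ 4(n-1)·e^{4k/(n-1)}/r for all r ∈ (0, r₀]. -/

import Mathlib

open Real Set Filter

/-- ODE mean curvature error estimate, `H = 0` case. -/
theorem ode_error_estimate_H_zero (n : ℕ) (hn : 2 ≤ n) (k r₀ : ℝ) (hk : 0 ≤ k) (hr₀ : 0 < r₀)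
    (ψ ψ' f f' : ℝ → ℝ)
    (hψ : ∀ t ∈ Ioc (0:ℝ) r₀, HasDerivAt ψ (ψ' t) t)
    (hf : ∀ t ∈ Icc (0:ℝ) r₀, HasDerivAt f (f' t) t)
    (hf'cont : ContinuousOn f' (Icc (0:ℝ) r₀))
    (hfbd : ∀ t ∈ Icc (0:ℝ) r₀, |f t| ≤ k)
    (hineq : ∀ t ∈ Ioc (0:ℝ) r₀,
      ψ' t + (2 / t + (2 / (n - 1 : ℝ)) * f' t) * ψ t ≤ 4 * (n - 1 : ℝ) / t ^ 2)
    (hbdry : Tendsto (fun t => t ^ 2 * Real.exp ((2 / (n - 1 : ℝ)) * f t) * ψ t)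
      (nhdsWithin 0 (Ioi 0)) (nhds 0)) :
    ∀ r ∈ Ioc (0:ℝ) r₀, ψ r ≤ 4 * (n - 1 : ℝ) * Real.exp (4 * k / (n - 1 : ℝ)) / r := by
  have h2n : (2:ℝ) ≤ (n:ℝ) := by exact_mod_cast hn
  have hmpos : (0:ℝ) < (n:ℝ) - 1 := by linarith
  set c : ℝ := 2 / ((n:ℝ) - 1) with hc
  have hcpos : 0 < c := by positivity
  set M : ℝ := 4 * ((n:ℝ) - 1) * Real.exp (c * k) with hMdef
  have hMpos : 0 < M := by positivity
  set g : ℝ → ℝ := fun t => t ^ 2 * Real.exp (c * f t) * ψ t with hgdef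
  have hg' : ∀ t ∈ Ioc (0:ℝ) r₀, HasDerivAt g
      (t ^ 2 * Real.exp (c * f t) * (ψ' t + (2 / t + c * f' t) * ψ t)) t := by
    intro t ht
    have hft := hf t ⟨le_of_lt ht.1, ht.2⟩
    have h1 : HasDerivAt (fun t => Real.exp (c * f t)) (Real.exp (c * f t) * (c * f' t)) t :=
      (hft.const_mul c).exp
    have h2 : HasDerivAt (fun t => t ^ 2 * Real.exp (c * f t))
        ((2 * t) * Real.exp (c * f t) + t ^ 2 * (Real.exp (c * f t) * (c * f' t))) t := by
      simpa using (hasDerivAt_pow 2 t).fun_mul h1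
    have h3 := h2.fun_mul (hψ t ht)
    refine h3.congr_deriv ?_
    have ht0 : t ≠ 0 := ne_of_gt ht.1
    field_simp
    ring
  have hg'le : ∀ t ∈ Ioc (0:ℝ) r₀,
      t ^ 2 * Real.exp (c * f t) * (ψ' t + (2 / t + c * f' t) * ψ t) ≤ M := by
    intro t ht
    have h1 := hineq t ht
    have hexp : Real.exp (c * f t) ≤ Real.exp (c * k) := by
      apply Real.exp_le_exp.2
      have := (abs_le.1 (hfbd t ⟨le_of_lt ht.1, ht.2⟩)).2
      nlinarith [hcpos.le]
    have ht2 : (0:ℝ) < t ^ 2 := pow_pos ht.1 2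
    calc t ^ 2 * Real.exp (c * f t) * (ψ' t + (2 / t + c * f' t) * ψ t)
        ≤ t ^ 2 * Real.exp (c * f t) * (4 * ((n:ℝ) - 1) / t ^ 2) :=
          mul_le_mul_of_nonneg_left h1 (by positivity)
      _ = 4 * ((n:ℝ) - 1) * Real.exp (c * f t) := by field_simp [ht.1.ne']
      _ ≤ M := by rw [hMdef]; exact mul_le_mul_of_nonneg_left hexp (by positivity)
  intro r hr
  -- step: g r ≤ M * r
  have key : ∀ ε ∈ Ioo (0:ℝ) r, g r - g ε ≤ M * (r - ε) := by
    intro ε hε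
    have hsub : Icc ε r ⊆ Ioc (0:ℝ) r₀ := fun x hx => ⟨lt_of_lt_of_le hε.1 hx.1, le_trans hx.2 hr.2⟩
    set h : ℝ → ℝ := fun t => M * t - g t with hhdef
    have hmono : MonotoneOn h (Icc ε r) := by
      have hd : ∀ x ∈ Icc ε r, HasDerivAt h
          (M - x ^ 2 * Real.exp (c * f x) * (ψ' x + (2 / x + c * f' x) * ψ x)) x := by
        intro x hx
        simpa using ((hasDerivAt_id x).const_mul M).fun_sub (hg' x (hsub hx))
      apply monotoneOn_of_deriv_nonneg (convex_Icc ε r)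
      · exact fun x hx => ((hd x hx).continuousAt).continuousWithinAt
      · intro x hx
        rw [interior_Icc] at hx
        exact ((hd x ⟨hx.1.le, hx.2.le⟩).differentiableAt).differentiableWithinAt
      · intro x hx
        rw [interior_Icc] at hx
        rw [(hd x ⟨hx.1.le, hx.2.le⟩).deriv]
        have := hg'le x (hsub ⟨hx.1.le, hx.2.le⟩)
        linarith
    have := hmono ⟨le_refl ε, hε.2.le⟩ ⟨hε.2.le, le_refl r⟩ hε.2.le
    simp only [hhdef] at this
    linarith
  have hgr : g r ≤ M * r := by
    have h1 : Tendsto (fun ε => g r - g ε) (nhdsWithin 0 (Ioi 0)) (nhds (g r - 0)) :=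
      tendsto_const_nhds.sub hbdry
    have h2 : Tendsto (fun ε => M * (r - ε)) (nhdsWithin 0 (Ioi 0)) (nhds (M * (r - 0))) := by
      apply Tendsto.const_mul
      exact (tendsto_const_nhds.sub (tendsto_nhdsWithin_of_tendsto_nhds tendsto_id))
    have h3 : ∀ᶠ ε in nhdsWithin 0 (Ioi 0), g r - g ε ≤ M * (r - ε) := by
      filter_upwards [Ioo_mem_nhdsGT_of_mem ⟨le_refl (0:ℝ), hr.1⟩] with ε hε
      exact key ε hε
    have := le_of_tendsto_of_tendsto h1 h2 h3
    simpa using this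
  -- finish
  have hrpos := hr.1
  have hexppos : (0:ℝ) < Real.exp (c * f r) := Real.exp_pos _
  have hψr : ψ r ≤ M * r / (r ^ 2 * Real.exp (c * f r)) := by
    rw [le_div_iff₀ (by positivity)]
    calc ψ r * (r ^ 2 * Real.exp (c * f r)) = g r := by rw [hgdef]; ring
      _ ≤ M * r := hgr
  have hexp2 : Real.exp (-(c * k)) ≤ Real.exp (c * f r) := by
    apply Real.exp_le_exp.2
    have := (abs_le.1 (hfbd r ⟨hrpos.le, hr.2⟩)).1
    nlinarith [hcpos.le]
  have hbound : M * r / (r ^ 2 * Real.exp (c * f r)) ≤ M * Real.exp (c * k) / r := by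
    rw [div_le_div_iff₀ (by positivity) hrpos]
    have : Real.exp (c * k) * Real.exp (c * f r) ≥ 1 := by
      have := Real.exp_le_exp.2 (le_refl (c * f r))
      calc Real.exp (c * k) * Real.exp (c * f r) ≥ Real.exp (c * k) * Real.exp (-(c * k)) :=
            mul_le_mul_of_nonneg_left hexp2 (Real.exp_pos _).le
        _ = 1 := by rw [← Real.exp_add]; simp
    nlinarith [mul_le_mul_of_nonneg_left this (by positivity : (0:ℝ) ≤ M * r ^ 2)]
  have hfinal : M * Real.exp (c * k) = 4 * ((n:ℝ) - 1) * Real.exp (4 * k / ((n:ℝ) - 1)) := by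
    rw [hMdef, mul_assoc, ← Real.exp_add]
    congr 2
    rw [hc]
    field_simp
    ring
  calc ψ r ≤ M * r / (r ^ 2 * Real.exp (c * f r)) := hψr
    _ ≤ M * Real.exp (c * k) / r := hbound
    _ = 4 * ((n:ℝ) - 1) * Real.exp (4 * k / ((n:ℝ) - 1)) / r := by rw [hfinal]
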